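/- Let $k$ be an algebraically closed field of characteristic zero, $a \geq 1$, and consider the Fermat-type polynomial $f = \prod_{0 \leq i < j \leq n}(x_i^a - x_j^a) \in k[x_0,\dots,x_n]$. Then for each $m = 1, \dots, n$ the derivation $\theta_m = \sum_{i=0}^n x_i^{(m-1)a+1} \partial_{x_i}$ satisfies $\theta_m(f) \in (f)$. -/
import Mathlib

open MvPolynomial Finset

lemma prod_dvd_derivation_prod {R A : Type*} [CommRing R] [CommRing A] [Algebra R A]
    (D : Derivation R A A) {ι : Type*} (s : Finset ι) (g : ι → A)
    (h : ∀ p ∈ s, g p ∣ D (g p)) :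
    (∏ p ∈ s, g p) ∣ D (∏ p ∈ s, g p) := by
  classical
  induction s using Finset.induction with
  | empty => simp
  | @insert i s hi ih =>
    rw [Finset.prod_insert hi, Derivation.leibniz, smul_eq_mul, smul_eq_mul]
    exact dvd_add (mul_dvd_mul_left _ (ih fun p hp => h p (Finset.mem_insert_of_mem hp)))
      (mul_comm (g i) (∏ p ∈ s, g p) ▸
        mul_dvd_mul_left _ (h i (Finset.mem_insert_self i s)))

/-- For the Fermat-type polynomial `f = ∏_{i<j}(xᵢᵃ - xⱼᵃ)`, the derivations
`θₘ = ∑ xᵢ^{(m-1)a+1} ∂ᵢ`, `1 ≤ m ≤ n`, are logarithmic. -/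
theorem fermat_arrangement_derivations {k : Type*} [Field k] [IsAlgClosed k] [CharZero k]
    {n : ℕ} (a : ℕ) (ha : 1 ≤ a)
    (f : MvPolynomial (Fin (n + 1)) k)
    (hf : f = ∏ p ∈ univ.filter (fun p : Fin (n + 1) × Fin (n + 1) => p.1 < p.2),
      ((X p.1) ^ a - (X p.2) ^ a))
    (m : ℕ) (hm1 : 1 ≤ m) (hmn : m ≤ n) :
    (mkDerivation k (fun i : Fin (n + 1) => (X i) ^ ((m - 1) * a + 1))) f
      ∈ Ideal.span {f} := by
  rw [Ideal.mem_span_singleton, hf]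
  apply prod_dvd_derivation_prod
  intro p _
  set D := mkDerivation k (fun i : Fin (n + 1) => (X i : MvPolynomial (Fin (n + 1)) k) ^ ((m - 1) * a + 1)) with hD
  obtain ⟨a, rfl⟩ : ∃ a', a = a' + 1 := ⟨a - 1, (Nat.succ_pred_eq_of_pos ha).symm⟩
  obtain ⟨m, rfl⟩ : ∃ m', m = m' + 1 := ⟨m - 1, (Nat.succ_pred_eq_of_pos hm1).symm⟩
  have key : ∀ i : Fin (n + 1), D ((X i) ^ (a + 1)) =
      (a + 1) • ((X i : MvPolynomial (Fin (n + 1)) k) ^ (a + 1)) ^ (m + 1) := by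
    intro i
    rw [Derivation.leibniz_pow, hD, mkDerivation_X]
    rw [smul_eq_mul, ← pow_add, ← pow_mul]
    congr 2
    simp only [Nat.add_sub_cancel]
    ring
  rw [map_sub, key, key, ← smul_sub]
  rw [nsmul_eq_mul]
  exact Dvd.dvd.mul_left (sub_dvd_pow_sub_pow _ _ _) _
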